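/- Let d ≥ 3, a ∈ (0,1), and C₀ > 0. Let 𝒢 : (0,∞)×ℝ^d → ℝ be a kernel satisfying, for every t > 0: ∫_{ℝ^d} 𝒢(t,x) dx = 0, ‖𝒢(t)‖_{L^∞(ℝ^d)} ≤ C₀ t^{−(d−1)}(1+t)^{−2}, and ‖|·|^a 𝒢(t,·)‖_{L¹(ℝ^d)} ≤ C₀ (1+t)^{−(1−a)}. Then there is a constant C depending only on d, a, C₀ such that for every t ≥ 1 and every ℏ : [0,t]×ℝ^d → ℝ with ℏ(s) ∈ L¹(ℝ^d) and ‖ℏ(s)‖_{Ḃ^a_{∞,∞}} < ∞ for 0 ≤ s ≤ t, the space-time convolution (𝒢 ∗_{(t,x)} ℏ)(t,x) := ∫₀^t ∫_{ℝ^d} 𝒢(t−s, x−y) ℏ(s,y) dy ds satisfies ⟨t⟩^d ‖(𝒢 ∗_{(t,x)} ℏ)(t)‖_{L^∞_x} ≤ C sup_{0≤s≤t} ( ‖ℏ(s)‖_{L¹(ℝ^d)} + ⟨s⟩^{d+a} ‖ℏ(s)‖_{Ḃ^a_{∞,∞}} ). -/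

import Mathlib

open MeasureTheory Real Filter
open scoped ENNReal InnerProductSpace Topology

noncomputable section

abbrev Ed (d : ℕ) := EuclideanSpace ℝ (Fin d)

/-- The Japanese bracket `⟨t⟩ = √(1+t²)` of a real number. -/
def jt (t : ℝ) : ℝ := Real.sqrt (1 + t ^ 2)

/-- The Japanese bracket `⟨v⟩ = √(1+|v|²)` of a vector. -/
def jv {d : ℕ} (v : Ed d) : ℝ := Real.sqrt (1 + ‖v‖ ^ 2)

/-- The Bessel kernel of `(I - Δ)⁻¹` on `ℝ^d`. -/
def besselG2 (d : ℕ) (x : Ed d) : ℝ :=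
  (4 * Real.pi) ^ (-(d : ℝ) / 2) *
    ∫ τ in Set.Ioi (0 : ℝ),
      Real.exp (-τ) * Real.exp (-‖x‖ ^ 2 / (4 * τ)) * τ ^ ((2 - (d : ℝ)) / 2) / τ

/-- The screened electric field `E = (∇G₂) ∗ ρ`. -/
def screenedField (d : ℕ) (ρ : Ed d → ℝ) (x : Ed d) : Ed d :=
  ∫ y : Ed d, ρ y • gradient (besselG2 d) (x - y)

/-- Homogeneous Besov seminorm `Ḃ^a_{p,∞}` via difference quotients. -/
def besov {d : ℕ} {F : Type*} [NormedAddCommGroup F] (a : ℝ) (p : ℝ≥0∞)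
    (f : Ed d → F) : ℝ≥0∞ :=
  ⨆ (α : Ed d) (_ : α ≠ 0),
    eLpNorm (fun x => f x - f (x - α)) p volume / ENNReal.ofReal (‖α‖ ^ a)

/-- Uncurrying of a function of `(x, v)`. -/
def unc {d : ℕ} {F : Type*} (g : Ed d → Ed d → F) : Ed d × Ed d → F :=
  fun p => g p.1 p.2

/-- Full gradient `∇_{x,v} g` of a function of `(x, v)`. -/
def gradxv {d : ℕ} (g : Ed d → Ed d → ℝ) (x v : Ed d) : (Ed d × Ed d) →L[ℝ] ℝ :=
  fderiv ℝ (unc g) (x, v)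

/-- Full second derivative `∇²_{x,v} g` of a function of `(x, v)`. -/
def grad2xv {d : ℕ} (g : Ed d → Ed d → ℝ) (x v : Ed d) :
    (Ed d × Ed d) →L[ℝ] ((Ed d × Ed d) →L[ℝ] ℝ) :=
  fderiv ℝ (fun p => fderiv ℝ (unc g) p) (x, v)

/-- Weighted sup norm `‖⟨v⟩^k g‖_{L^∞_{x,v}}`. -/
def supW {d : ℕ} {F : Type*} [NormedAddCommGroup F] (k : ℝ) (g : Ed d → Ed d → F) : ℝ≥0∞ :=
  ⨆ (x : Ed d) (v : Ed d), ENNReal.ofReal (jv v ^ k * ‖g x v‖)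

/-- Weighted norm `‖g‖_{W^{2,∞}_k}`. -/
def W2K {d : ℕ} (k : ℝ) (g : Ed d → Ed d → ℝ) : ℝ≥0∞ :=
  supW k g + supW k (fun x v => gradxv g x v) + supW k (fun x v => grad2xv g x v)

/-- Weighted norm `‖g‖_{W^{1,∞}_k}`. -/
def W1K {d : ℕ} (k : ℝ) (g : Ed d → Ed d → ℝ) : ℝ≥0∞ :=
  supW k g + supW k (fun x v => gradxv g x v)

/-- `W^{1,1}(ℝ^d × ℝ^d)` norm. -/
def W11 {d : ℕ} (g : Ed d → Ed d → ℝ) : ℝ≥0∞ :=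
  (∫⁻ p : Ed d × Ed d, ENNReal.ofReal |unc g p|) +
  (∫⁻ p : Ed d × Ed d, ENNReal.ofReal ‖fderiv ℝ (unc g) p‖)

/-- `‖⟨v⟩^k g‖_{L¹_x L^∞_v}` norm. -/
def L1xLinfv {d : ℕ} {F : Type*} [NormedAddCommGroup F] (k : ℝ) (g : Ed d → Ed d → F) : ℝ≥0∞ :=
  ∫⁻ x : Ed d, ⨆ v : Ed d, ENNReal.ofReal (jv v ^ k * ‖g x v‖)

/-- `‖g‖_{L¹_v L^∞_x}` norm. -/
def L1vLinfx {d : ℕ} {F : Type*} [NormedAddCommGroup F] (g : Ed d → Ed d → F) : ℝ≥0∞ :=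
  ∫⁻ v : Ed d, ⨆ x : Ed d, ENNReal.ofReal ‖g x v‖

/-- `‖g‖_{L¹_x L¹_v}` norm. -/
def L1xL1v {d : ℕ} {F : Type*} [NormedAddCommGroup F] (g : Ed d → Ed d → F) : ℝ≥0∞ :=
  ∫⁻ x : Ed d, ∫⁻ v : Ed d, ENNReal.ofReal ‖g x v‖

/-- The fractional difference operator `D^a = D₁^a + D₂^a`. -/
def Dfrac {d : ℕ} {F : Type*} [NormedAddCommGroup F] (a : ℝ) (g : Ed d → Ed d → F)
    (x v : Ed d) : ℝ≥0∞ :=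
  (⨆ (z : Ed d) (_ : z ≠ 0), ENNReal.ofReal (‖g x v - g (x - z) v‖ / ‖z‖ ^ a)) +
  (⨆ (z : Ed d) (_ : z ≠ 0), ENNReal.ofReal (‖g x v - g x (v - z)‖ / ‖z‖ ^ a))

/-- The initial data norm `|||f|||₁`. -/
def dataNorm1 {d : ℕ} (k a : ℝ) (f : Ed d → Ed d → ℝ) : ℝ≥0∞ :=
  W11 f + W2K k f
    + L1xLinfv k (fun x v => gradxv f x v)
    + (∫⁻ x : Ed d, ⨆ v : Ed d,
        ENNReal.ofReal (jv v ^ k) * Dfrac a (fun x v => gradxv f x v) x v)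
    + L1xLinfv k (fun x v => grad2xv f x v)

/-- The initial data norm `|||f|||₂`. -/
def dataNorm2 {d : ℕ} (a : ℝ) (f : Ed d → Ed d → ℝ) : ℝ≥0∞ :=
  W11 f + L1vLinfx f + L1xLinfv 0 f
    + L1vLinfx (fun x v => gradxv f x v) + L1xLinfv 0 (fun x v => gradxv f x v)
    + (∫⁻ x : Ed d, ∫⁻ v : Ed d, Dfrac a f x v)
    + (∫⁻ x : Ed d, ⨆ v : Ed d, Dfrac a f x v)

/-- Net charge density `ρ = ∫ (f⁺ - f⁻) dv`. -/
def netDensity (d : ℕ) (fp fm : ℝ → Ed d → Ed d → ℝ) (t : ℝ) (x : Ed d) : ℝ :=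
  ∫ v : Ed d, (fp t x v - fm t x v)

/-- The `±`-species Vlasov equation with field `E` and background `μ`, for `t ∈ S`. -/
def VlasovEqOn (d : ℕ) (S : Set ℝ) (μ : Ed d → ℝ) (E : ℝ → Ed d → Ed d) (sgn : ℝ)
    (f : ℝ → Ed d → Ed d → ℝ) : Prop :=
  ∀ t ∈ S, ∀ (x v : Ed d),
    deriv (fun s => f s x v) t
      + ⟪v, gradient (fun y => f t y v) x⟫_ℝ
      + sgn * ⟪E t x, gradient (fun w => f t x w) v⟫_ℝ
      = -(sgn * ⟪E t x, gradient μ v⟫_ℝ)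

/-- The two-species screened Vlasov–Poisson perturbation system, for `t ∈ S`. -/
def IsVPSolutionOn (d : ℕ) (S : Set ℝ) (μ : Ed d → ℝ) (fp fm : ℝ → Ed d → Ed d → ℝ) : Prop :=
  VlasovEqOn d S μ (fun t => screenedField d (netDensity d fp fm t)) 1 fp ∧
  VlasovEqOn d S μ (fun t => screenedField d (netDensity d fp fm t)) (-1) fm

/-- The regularity assumption on the equilibrium `μ`. -/
def MuRegular (d : ℕ) (μ : Ed d → ℝ) : Prop :=
  (∀ N : ℝ, (d : ℝ) < N →
    (⨆ v : Ed d, ENNReal.ofReal (jv v ^ N *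
      (‖gradient μ v‖ + ‖fderiv ℝ (fun w => gradient μ w) v‖ +
        ‖fderiv ℝ (fun w => fderiv ℝ (fun u => gradient μ u) w) v‖))) < ⊤) ∧
  (∀ i : ℕ, i ≤ 2 * d + 7 →
    (∫⁻ v : Ed d, ENNReal.ofReal (jv v ^ ((d : ℝ) + 5) *
      ‖iteratedFDeriv ℝ i (fun w => gradient μ w) v‖)) < ⊤)

/-- Fourier transform of `∇_v μ`, componentwise. -/
def ftGradMu (d : ℕ) (μ : Ed d → ℝ) (ξ : Ed d) (i : Fin d) : ℂ :=
  ∫ v : Ed d, Complex.exp (-(Complex.I * Complex.ofReal ⟪v, ξ⟫_ℝ)) *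
    Complex.ofReal (gradient μ v i)

/-- The Penrose stability condition for the screened interaction. -/
def PenroseStable (d : ℕ) (μ : Ed d → ℝ) : Prop :=
  ∃ κ : ℝ, 0 < κ ∧ ∀ (ξ : Ed d) (z : ℂ), z.im < 0 →
    κ ≤ ‖(1 + 2 * ∫ s in Set.Ioi (0 : ℝ),
      Complex.exp (-(Complex.I * z * s)) *
        (Complex.I / (1 + Complex.ofReal ‖ξ‖ ^ 2)) *
        ∑ i : Fin d, Complex.ofReal (ξ i) * ftGradMu d μ (s • ξ) i : ℂ)‖

/-- Membership in `C(S; W^{1,1} ∩ W^{1,∞}_{k-1}) ∩ L^∞(S; W^{2,∞}_k)`. -/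
def InSolClass (d : ℕ) (k : ℝ) (S : Set ℝ) (f : ℝ → Ed d → Ed d → ℝ) : Prop :=
  (∀ t ∈ S, W11 (f t) < ⊤ ∧ W1K (k - 1) (f t) < ⊤) ∧
  (∀ t ∈ S,
    Filter.Tendsto (fun s => W11 (fun x v => f s x v - f t x v) +
        W1K (k - 1) (fun x v => f s x v - f t x v))
      (nhdsWithin t S) (nhds 0)) ∧
  (⨆ (t : ℝ) (_ : t ∈ S), W2K k (f t)) < ⊤

/-- Spatial gradient of a scalar function on `ℝ^d`, as a vector field. -/
def gradx {d : ℕ} (g : Ed d → ℝ) : Ed d → Ed d := fun x => gradient g x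

/-- The bootstrap bounds on the net charge density with parameter `ε`. -/
def Bootstrap (d : ℕ) (a γ ε T : ℝ) (ρ : ℝ → Ed d → ℝ) : Prop :=
  ∀ t ∈ Set.Icc (0 : ℝ) T,
    eLpNorm (ρ t) ⊤ volume ≤ ENNReal.ofReal (ε * jt t ^ (-(d : ℝ) + γ)) ∧
    besov a ⊤ (ρ t) ≤ ENNReal.ofReal (ε * jt t ^ (-((d : ℝ) + a) + γ)) ∧
    besov a 1 (ρ t) ≤ ENNReal.ofReal (ε * jt t ^ (-a + γ)) ∧
    eLpNorm (gradx (ρ t)) ⊤ volume ≤ ENNReal.ofReal (ε * jt t ^ (-((d : ℝ) + 1) + γ)) ∧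
    eLpNorm (gradx (ρ t)) 1 volume ≤ ENNReal.ofReal (ε * jt t ^ (-1 + γ))

/-- `Y^±_{s,t}` solves the straightened-characteristics fixed point equation on `[0,T]`. -/
def IsYfield (d : ℕ) (T : ℝ) (E : ℝ → Ed d → Ed d) (sgn : ℝ)
    (Y : ℝ → ℝ → Ed d → Ed d → Ed d) : Prop :=
  ∀ s t : ℝ, 0 ≤ s → s ≤ t → t ≤ T → ∀ x v : Ed d,
    Y s t x v = sgn • ∫ τ in s..t, (τ - s) • E τ (x + τ • v + Y τ t x v)

/-- `W^±_{s,t}` associated with `Y^±_{s,t}`. -/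
def Wfield (d : ℕ) (E : ℝ → Ed d → Ed d) (sgn : ℝ)
    (Y : ℝ → ℝ → Ed d → Ed d → Ed d) (s t : ℝ) (x v : Ed d) : Ed d :=
  (-sgn) • ∫ τ in s..t, E τ (x + τ • v + Y τ t x v)

/-- The characteristic flow with terminal data `(x,v)` at time `t`, on `[0,T]`. -/
def IsCharFlow (d : ℕ) (T : ℝ) (E : ℝ → Ed d → Ed d) (sgn : ℝ)
    (X V : ℝ → ℝ → Ed d → Ed d → Ed d) : Prop :=
  ∀ t ∈ Set.Icc (0 : ℝ) T, ∀ (x v : Ed d),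
    X t t x v = x ∧ V t t x v = v ∧
    ∀ s ∈ Set.Icc (0 : ℝ) T,
      HasDerivAt (fun σ => X σ t x v) (V s t x v) s ∧
      HasDerivAt (fun σ => V σ t x v) (sgn • E s (X s t x v)) s


/-- Space-time convolution `(𝒢 ∗_{(t,x)} ℏ)(t,x) = ∫₀ᵗ ∫ 𝒢(t-s, x-y) ℏ(s,y) dy ds`. -/
def stConv (d : ℕ) (G h : ℝ → Ed d → ℝ) (t : ℝ) (x : Ed d) : ℝ :=
  ∫ s in (0 : ℝ)..t, ∫ y : Ed d, G (t - s) (x - y) * h s y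

section AuxVPLemmas
open MeasureTheory.Measure

lemma jt_pos (t : ℝ) : 0 < jt t := Real.sqrt_pos.2 (by positivity)

lemma one_le_jt (t : ℝ) : 1 ≤ jt t := by
  rw [jt]
  nlinarith [Real.sq_sqrt (show (0:ℝ) ≤ 1 + t^2 by positivity),
    Real.sqrt_nonneg (1 + t^2)]

lemma le_jt {t : ℝ} (ht : 0 ≤ t) : t ≤ jt t := by
  rw [jt]
  nlinarith [Real.sq_sqrt (show (0:ℝ) ≤ 1 + t^2 by positivity),
    Real.sqrt_nonneg (1 + t^2)]

lemma jt_mono {s t : ℝ} (hs : 0 ≤ s) (hst : s ≤ t) : jt s ≤ jt t :=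
  Real.sqrt_le_sqrt (by nlinarith)

lemma jt_le_two_jt_half (t : ℝ) : jt t ≤ 2 * jt (t / 2) := by
  rw [jt, jt]
  nlinarith [Real.sq_sqrt (show (0:ℝ) ≤ 1 + t^2 by positivity),
    Real.sq_sqrt (show (0:ℝ) ≤ 1 + (t/2)^2 by positivity),
    Real.sqrt_nonneg (1 + t^2), Real.sqrt_nonneg (1 + (t/2)^2)]

lemma jt_le_two_mul {t : ℝ} (ht : 1 ≤ t) : jt t ≤ 2 * t := by
  rw [jt, show 2*t = Real.sqrt ((2*t)^2) from (Real.sqrt_sq (by linarith)).symm]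
  exact Real.sqrt_le_sqrt (by nlinarith)

lemma rpow_add_le_add_rpow' {x y p : ℝ} (hx : 0 ≤ x) (hy : 0 ≤ y) (hp : 0 ≤ p) (hp1 : p ≤ 1) :
    (x + y) ^ p ≤ x ^ p + y ^ p := by
  have h := NNReal.rpow_add_le_add_rpow (x.toNNReal) (y.toNNReal) hp hp1
  have h2 := NNReal.coe_le_coe.mpr h
  rw [← Real.toNNReal_add hx hy] at h2
  simpa [NNReal.coe_rpow, Real.coe_toNNReal, hx, hy, add_nonneg hx hy] using h2

lemma ae_holder_of_besov {d : ℕ} {a : ℝ} {f : Ed d → ℝ} {B : ℝ}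
    (hbes : besov a ⊤ f ≤ ENNReal.ofReal B) (hB : 0 ≤ B) {α : Ed d} (hα : α ≠ 0) :
    ∀ᵐ x : Ed d, |f x - f (x - α)| ≤ B * ‖α‖ ^ a := by
  have hα' : (0:ℝ) < ‖α‖ ^ a := Real.rpow_pos_of_pos (norm_pos_iff.2 hα) a
  have h1 : eLpNorm (fun x => f x - f (x - α)) ⊤ volume / ENNReal.ofReal (‖α‖ ^ a)
      ≤ ENNReal.ofReal B :=
    le_trans (le_iSup₂ (f := fun (β : Ed d) (_ : β ≠ 0) =>
      eLpNorm (fun x => f x - f (x - β)) ⊤ volume / ENNReal.ofReal (‖β‖ ^ a)) α hα) hbes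
  have h2 : eLpNorm (fun x => f x - f (x - α)) ⊤ volume ≤ ENNReal.ofReal (B * ‖α‖ ^ a) := by
    rw [ENNReal.ofReal_mul hB]
    exact (ENNReal.div_le_iff (ne_of_gt (ENNReal.ofReal_pos.2 hα')) (by simp)).1 h1
  rw [eLpNorm_exponent_top] at h2
  filter_upwards [ae_le_eLpNormEssSup (f := fun x => f x - f (x - α)) (μ := volume)] with x hx
  have h3 : ENNReal.ofReal ‖f x - f (x - α)‖ ≤ ENNReal.ofReal (B * ‖α‖ ^ a) := by
    rw [ofReal_norm]; exact le_trans hx h2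
  rw [Real.norm_eq_abs] at h3
  exact (ENNReal.ofReal_le_ofReal_iff (by positivity)).1 h3

lemma besov_good_set {d : ℕ} (hd : 0 < d) {a : ℝ} {f : Ed d → ℝ} (hf : Measurable f)
    {B : ℝ} (hB : 0 ≤ B) (hbes : besov a ⊤ f ≤ ENNReal.ofReal B) :
    ∀ᵐ x : Ed d, ∀ᵐ α : Ed d, |f x - f (x - α)| ≤ B * ‖α‖ ^ a := by
  haveI : Nontrivial (Ed d) := ⟨⟨0, EuclideanSpace.single ⟨0, hd⟩ 1, by
    intro h
    have := congrArg (fun v : Ed d => v ⟨0, hd⟩) h.symm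
    simp [EuclideanSpace.single] at this⟩⟩
  set S : Set (Ed d × Ed d) := {q | B * ‖q.1‖ ^ a < |f q.2 - f (q.2 - q.1)|} with hS
  have hSm : MeasurableSet S := by
    apply measurableSet_lt
    · fun_prop
    · exact ((hf.comp measurable_snd).sub (hf.comp (measurable_snd.sub measurable_fst))).abs
  have hnull : (volume.prod volume) S = 0 := by
    rw [Measure.measure_prod_null hSm]
    have hae : ∀ᵐ α : Ed d, α ≠ 0 := by
      rw [ae_iff]
      simpa using measure_singleton (0 : Ed d)
    filter_upwards [hae] with α hα
    have h1 := ae_holder_of_besov hbes hB hα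
    have h2 := ae_iff.mp h1
    simpa [S, Set.preimage, not_le] using h2
  have hswap : (volume.prod volume) (Prod.swap ⁻¹' S) = 0 := by
    rw [MeasurePreserving.measure_preimage measurePreserving_swap hSm.nullMeasurableSet]
    exact hnull
  have hae2 : ∀ᵐ q : Ed d × Ed d ∂((volume : Measure (Ed d)).prod volume),
      |f q.1 - f (q.1 - q.2)| ≤ B * ‖q.2‖ ^ a := by
    rw [ae_iff]
    convert hswap using 2
    ext q
    simp [S, Set.preimage, Prod.swap, not_le]
  have h3 := Measure.ae_ae_of_ae_prod hae2
  exact h3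

lemma besov_pairwise {d : ℕ} (hd : 0 < d) {a : ℝ} (ha0 : 0 < a) (ha1 : a < 1)
    {f : Ed d → ℝ} (hf : Measurable f) {B : ℝ} (hB : 0 ≤ B)
    (hbes : besov a ⊤ f ≤ ENNReal.ofReal B) :
    ∃ Gs : Set (Ed d), volume Gsᶜ = 0 ∧
      ∀ u ∈ Gs, ∀ w ∈ Gs, |f u - f w| ≤ 3 * B * ‖u - w‖ ^ a := by
  refine ⟨{x | ∀ᵐ α : Ed d, |f x - f (x - α)| ≤ B * ‖α‖ ^ a}, ?_, ?_⟩
  · have := ae_iff.mp (besov_good_set hd hf hB hbes)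
    rw [Set.compl_setOf]
    exact this
  · intro u hu w hw
    rcases eq_or_ne u w with rfl | huw
    · have h0 : f u - f u = 0 := sub_self _
      rw [h0, abs_zero]
      positivity
    · have hr : (0:ℝ) < ‖u - w‖ := by
        rw [norm_pos_iff]; exact sub_ne_zero.2 huw
      set r := ‖u - w‖ with hrdef
      have hu' : ∀ᵐ y : Ed d, |f u - f y| ≤ B * ‖u - y‖ ^ a := by
        have h := (Measure.measurePreserving_sub_left volume u).quasiMeasurePreserving.tendsto_ae.eventually hu
        filter_upwards [h] with y hy
        simpa [sub_sub_cancel] using hy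
      have hw' : ∀ᵐ y : Ed d, |f w - f y| ≤ B * ‖w - y‖ ^ a := by
        have h := (Measure.measurePreserving_sub_left volume w).quasiMeasurePreserving.tendsto_ae.eventually hw
        filter_upwards [h] with y hy
        simpa [sub_sub_cancel] using hy
      have hball : volume (Metric.ball u r) ≠ 0 := (Metric.measure_ball_pos volume u hr).ne'
      have hboth := hu'.and hw'
      have hgood : volume (Metric.ball u r \ {y | ¬ (|f u - f y| ≤ B * ‖u - y‖ ^ a ∧
          |f w - f y| ≤ B * ‖w - y‖ ^ a)}) ≠ 0 := by
        rwa [measure_diff_null (ae_iff.mp hboth)]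
      obtain ⟨y, hy⟩ := nonempty_of_measure_ne_zero hgood
      obtain ⟨hyu, hyw⟩ := not_not.1 hy.2
      have hd1 : ‖u - y‖ ≤ r := by
        have := hy.1
        rw [Metric.mem_ball, dist_comm, dist_eq_norm] at this
        exact this.le
      have hd2 : ‖w - y‖ ≤ 2 * r := by
        have : w - y = (w - u) + (u - y) := by abel
        rw [this]
        have hwu : ‖w - u‖ = r := by rw [hrdef, norm_sub_rev]
        calc ‖(w - u) + (u - y)‖ ≤ ‖w - u‖ + ‖u - y‖ := norm_add_le _ _
          _ ≤ 2 * r := by rw [hwu]; linarith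
      have h1 : ‖u - y‖ ^ a ≤ r ^ a := Real.rpow_le_rpow (norm_nonneg _) hd1 ha0.le
      have h2 : ‖w - y‖ ^ a ≤ 2 * r ^ a := by
        calc ‖w - y‖ ^ a ≤ (2 * r) ^ a := Real.rpow_le_rpow (norm_nonneg _) hd2 ha0.le
          _ = 2 ^ a * r ^ a := Real.mul_rpow (by norm_num) hr.le
          _ ≤ 2 * r ^ a := by
            have h2a : (2:ℝ) ^ a ≤ 2 ^ (1:ℝ) := Real.rpow_le_rpow_of_exponent_le one_le_two ha1.le
            rw [Real.rpow_one] at h2a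
            have : (0:ℝ) ≤ r ^ a := Real.rpow_nonneg hr.le a
            nlinarith
      have habs : |f u - f w| ≤ |f u - f y| + |f w - f y| := by
        have : f u - f w = (f u - f y) - (f w - f y) := by ring
        rw [this]
        exact abs_sub _ _
      have hru : (0:ℝ) ≤ r ^ a := Real.rpow_nonneg hr.le a
      nlinarith [mul_le_mul_of_nonneg_left h1 hB, mul_le_mul_of_nonneg_left h2 hB]

lemma conv_sup_bound {d : ℕ} {g f : Ed d → ℝ} (hf : Integrable f) {c : ℝ} (hc : 0 ≤ c)
    (hsup : eLpNorm g ⊤ volume ≤ ENNReal.ofReal c) (x : Ed d) :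
    |∫ y, g (x - y) * f y| ≤ c * ∫ y, |f y| := by
  have hae : ∀ᵐ z : Ed d, |g z| ≤ c := by
    rw [eLpNorm_exponent_top] at hsup
    filter_upwards [ae_le_eLpNormEssSup (f := g) (μ := volume)] with z hz
    have h3 : ENNReal.ofReal ‖g z‖ ≤ ENNReal.ofReal c := by
      rw [ofReal_norm]; exact hz.trans hsup
    rw [Real.norm_eq_abs] at h3
    exact (ENNReal.ofReal_le_ofReal_iff hc).1 h3
  have hae2 : ∀ᵐ y : Ed d, ‖g (x - y) * f y‖ ≤ c * |f y| := by
    filter_upwards [(Measure.measurePreserving_sub_left volume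
      x).quasiMeasurePreserving.tendsto_ae.eventually hae] with y hy
    rw [Real.norm_eq_abs, abs_mul]
    exact mul_le_mul_of_nonneg_right hy (abs_nonneg _)
  calc |∫ y, g (x - y) * f y| ≤ ∫ y, c * |f y| := by
        rw [← Real.norm_eq_abs]
        exact norm_integral_le_of_norm_le (hf.abs.const_mul c) hae2
    _ = c * ∫ y, |f y| := integral_const_mul c _

lemma conv_besov_bound {d : ℕ} (hd : 0 < d) {a : ℝ} (ha0 : 0 < a) (ha1 : a < 1)
    {g f : Ed d → ℝ} (hg : Integrable g) (hgm : (∫ z, g z) = 0)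
    (hga : Integrable (fun z => ‖z‖ ^ a * |g z|))
    (hf : Integrable f) (hbtop : besov a ⊤ f < ⊤) (x : Ed d) :
    |∫ y, g (x - y) * f y| ≤ 3 * (besov a ⊤ f).toReal * ∫ z, ‖z‖ ^ a * |g z| := by
  set B := (besov a ⊤ f).toReal with hBdef
  have hB : 0 ≤ B := ENNReal.toReal_nonneg
  have hbesB : besov a ⊤ f ≤ ENNReal.ofReal B := by
    rw [hBdef, ENNReal.ofReal_toReal hbtop.ne]
  set f' := hf.1.mk f with hf'def
  have hff' : f =ᵐ[volume] f' := hf.1.ae_eq_mk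
  have hmeas : Measurable f' := hf.1.stronglyMeasurable_mk.measurable
  have hbes' : besov a ⊤ f' ≤ ENNReal.ofReal B := by
    refine le_trans (le_of_eq ?_) hbesB
    unfold besov
    refine iSup_congr fun α => iSup_congr fun hα => ?_
    congr 1
    apply eLpNorm_congr_ae
    have h2 : (fun y : Ed d => f (y - α)) =ᵐ[volume] (fun y => f' (y - α)) :=
      (measurePreserving_sub_right volume α).quasiMeasurePreserving.tendsto_ae.eventually hff'
    filter_upwards [hff', h2] with y e1 e2
    rw [e1, e2]
  obtain ⟨Gs, hGsnull, hGs⟩ := besov_pairwise hd ha0 ha1 hmeas hB hbes'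
  have hGsae : ∀ᵐ y : Ed d, y ∈ Gs := by
    rw [ae_iff]
    exact hGsnull
  have hI : ∫ y, g (x - y) * f y = ∫ y, g (x - y) * f' y :=
    integral_congr_ae (hff'.mono fun y hy => by dsimp only; rw [hy])
  rw [hI]
  have hCV : ∫ y, g (x - y) * f' y = ∫ z, g z * f' (x - z) := by
    rw [← integral_sub_left_eq_self (fun z => g z * f' (x - z)) volume x]
    congr 1
    ext y
    rw [sub_sub_cancel]
  rw [hCV]
  set IA := ∫ z, ‖z‖ ^ a * |g z| with hIAdef
  have hIA0 : 0 ≤ IA := integral_nonneg fun z => by positivity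
  have hG1 : (0:ℝ) ≤ ∫ z, |g z| := integral_nonneg fun z => abs_nonneg _
  have main : ∀ δ : ℝ, 0 < δ →
      |∫ z, g z * f' (x - z)| ≤ 3*B*IA + (3*B*(∫ z, |g z|)) * δ ^ a := by
    intro δ hδ
    obtain ⟨x₀, hx₀G, hx₀d⟩ : ∃ x₀ ∈ Gs, ‖x - x₀‖ ≤ δ := by
      have hgood : volume (Metric.ball x δ \ Gsᶜ) ≠ 0 := by
        rw [measure_diff_null hGsnull]
        exact (Metric.measure_ball_pos volume x hδ).ne'
      obtain ⟨y, hy⟩ := nonempty_of_measure_ne_zero hgood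
      refine ⟨y, not_not.1 hy.2, ?_⟩
      have := hy.1
      rw [Metric.mem_ball, dist_comm, dist_eq_norm] at this
      exact this.le
    have hae : ∀ᵐ z : Ed d, (x - z) ∈ Gs :=
      (Measure.measurePreserving_sub_left volume
        x).quasiMeasurePreserving.tendsto_ae.eventually hGsae
    have hmz : ∀ᵐ z : Ed d, ‖g z * (f' (x - z) - f' x₀)‖ ≤ 3*B*(‖z‖^a + δ^a) * |g z| := by
      filter_upwards [hae] with z hz
      have h1 : |f' (x - z) - f' x₀| ≤ 3*B*‖(x - z) - x₀‖^a := hGs _ hz _ hx₀G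
      have h2 : ‖(x - z) - x₀‖ ^ a ≤ ‖z‖^a + δ^a := by
        calc ‖(x - z) - x₀‖ ^ a ≤ (‖z‖ + δ) ^ a := by
              apply Real.rpow_le_rpow (norm_nonneg _) ?_ ha0.le
              calc ‖(x - z) - x₀‖ = ‖(x - x₀) - z‖ := by
                    congr 1
                    abel
                _ ≤ ‖x - x₀‖ + ‖z‖ := norm_sub_le _ _
                _ ≤ ‖z‖ + δ := by linarith
          _ ≤ ‖z‖^a + δ^a := rpow_add_le_add_rpow' (norm_nonneg _) hδ.le ha0.le ha1.le
      have hza : (0:ℝ) ≤ ‖z‖^a := Real.rpow_nonneg (norm_nonneg _) a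
      have hda : (0:ℝ) ≤ δ^a := Real.rpow_nonneg hδ.le a
      have hxa : (0:ℝ) ≤ ‖(x - z) - x₀‖ ^ a := Real.rpow_nonneg (norm_nonneg _) a
      have hkey := mul_le_mul_of_nonneg_right
        (h1.trans (mul_le_mul_of_nonneg_left h2 (by positivity))) (abs_nonneg (g z))
      calc ‖g z * (f' (x - z) - f' x₀)‖ = |g z| * |f' (x - z) - f' x₀| := by
            rw [Real.norm_eq_abs, abs_mul]
        _ = |f' (x - z) - f' x₀| * |g z| := mul_comm _ _
        _ ≤ 3*B*(‖z‖^a + δ^a) * |g z| := hkey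
    have hmaj : Integrable (fun z : Ed d => 3*B*(‖z‖^a + δ^a) * |g z|) := by
      have he : (fun z : Ed d => 3*B*(‖z‖^a + δ^a) * |g z|)
          = fun z => (3*B)*(‖z‖^a * |g z|) + (3*B*δ^a) * |g z| := by
        ext z; ring
      rw [he]
      exact (hga.const_mul _).add (hg.abs.const_mul _)
    have hφmeas : AEStronglyMeasurable (fun z : Ed d => g z * (f' (x - z) - f' x₀)) volume := by
      apply hg.1.mul
      exact ((hmeas.comp (measurable_const.sub measurable_id)).sub
        measurable_const).aestronglyMeasurable
    have hφint : Integrable (fun z : Ed d => g z * (f' (x - z) - f' x₀)) :=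
      Integrable.mono' hmaj hφmeas hmz
    have hsplit : ∫ z, g z * f' (x - z) = ∫ z, g z * (f' (x - z) - f' x₀) := by
      have h3 : ∫ z, g z * f' x₀ = (∫ z, g z) * f' x₀ := integral_mul_const _ _
      calc ∫ z, g z * f' (x - z)
          = ∫ z, (g z * (f' (x - z) - f' x₀) + g z * f' x₀) := by
            congr 1; ext z; ring
        _ = (∫ z, g z * (f' (x - z) - f' x₀)) + ∫ z, g z * f' x₀ :=
            integral_add hφint (hg.mul_const _)
        _ = ∫ z, g z * (f' (x - z) - f' x₀) := by
            rw [h3, hgm, zero_mul, add_zero]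
    rw [hsplit]
    calc |∫ z, g z * (f' (x - z) - f' x₀)| ≤ ∫ z, 3*B*(‖z‖^a + δ^a) * |g z| := by
          rw [← Real.norm_eq_abs]
          exact norm_integral_le_of_norm_le hmaj hmz
      _ = 3*B*IA + (3*B*(∫ z, |g z|)) * δ ^ a := by
          have he : (fun z : Ed d => 3*B*(‖z‖^a + δ^a) * |g z|)
              = fun z => (3*B)*(‖z‖^a * |g z|) + (3*B*δ^a) * |g z| := by
            ext z; ring
          rw [he, integral_add ((hga.const_mul _)) (hg.abs.const_mul _),
            integral_const_mul, integral_const_mul, hIAdef]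
          ring
  refine le_of_forall_pos_le_add fun ε hε => ?_
  set c := 3*B*(∫ z, |g z|) with hcdef
  have hc0 : 0 ≤ c := by positivity
  rcases eq_or_lt_of_le hc0 with hc | hc
  · have := main 1 one_pos
    rw [← hc] at this
    simpa using this.trans (by linarith)
  · have hδ : (0:ℝ) < (ε / c) ^ (a⁻¹) := Real.rpow_pos_of_pos (div_pos hε hc) _
    have := main _ hδ
    rwa [Real.rpow_inv_rpow (div_pos hε hc).le ha0.ne', mul_div_cancel₀ _ hc.ne'] at this

end AuxVPLemmas

set_option maxHeartbeats 2000000 in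
/-- part of Lemma 5.2: dispersive `L^∞` bound for the space-time
convolution with a mean-zero kernel. -/
theorem stConv_Linfty_decay (d : ℕ) (hd : 3 ≤ d) (a : ℝ) (ha0 : 0 < a) (ha1 : a < 1)
    (C₀ : ℝ) (hC₀ : 0 < C₀) :
    ∃ C : ℝ, 0 < C ∧
      ∀ G : ℝ → Ed d → ℝ,
        (∀ t : ℝ, 0 < t →
          Integrable (G t) ∧ (∫ x : Ed d, G t x) = 0 ∧
          eLpNorm (G t) ⊤ volume
            ≤ ENNReal.ofReal (C₀ * t ^ (-((d : ℝ) - 1)) * (1 + t) ^ (-2 : ℝ)) ∧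
          (∫⁻ x : Ed d, ENNReal.ofReal (‖x‖ ^ a * |G t x|))
            ≤ ENNReal.ofReal (C₀ * (1 + t) ^ (a - 1))) →
      ∀ t : ℝ, 1 ≤ t →
      ∀ h : ℝ → Ed d → ℝ,
        (∀ s ∈ Set.Icc (0 : ℝ) t, Integrable (h s) ∧ besov a ⊤ (h s) < ⊤) →
        ENNReal.ofReal (jt t ^ (d : ℝ)) * eLpNorm (stConv d G h t) ⊤ volume ≤
          ENNReal.ofReal C *
            ⨆ s ∈ Set.Icc (0 : ℝ) t,
              (eLpNorm (h s) 1 volume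
                + ENNReal.ofReal (jt s ^ ((d : ℝ) + a)) * besov a ⊤ (h s)) := by
  have hd0 : 0 < d := by omega
  have hd3 : (3:ℝ) ≤ (d:ℝ) := by exact_mod_cast hd
  set C : ℝ := C₀ * ((4:ℝ) ^ (d:ℝ) + 3 * (2:ℝ) ^ ((d:ℝ)+2) / a) with hCdef
  have hCpos : 0 < C := by
    rw [hCdef]
    have h4 : (0:ℝ) < (4:ℝ) ^ (d:ℝ) := Real.rpow_pos_of_pos (by norm_num) _
    have h2 : (0:ℝ) < (2:ℝ) ^ ((d:ℝ)+2) := Real.rpow_pos_of_pos (by norm_num) _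
    positivity
  refine ⟨C, hCpos, ?_⟩
  intro G hG t ht h hh
  set M := ⨆ s ∈ Set.Icc (0:ℝ) t, (eLpNorm (h s) 1 volume
      + ENNReal.ofReal (jt s ^ ((d:ℝ) + a)) * besov a ⊤ (h s)) with hMdef
  by_cases hMtop : M = ⊤
  · rw [hMtop, ENNReal.mul_top (ENNReal.ofReal_pos.2 hCpos).ne']
    exact le_top
  set M' := M.toReal with hM'def
  have hM'0 : 0 ≤ M' := ENNReal.toReal_nonneg
  have hofM : ENNReal.ofReal M' = M := ENNReal.ofReal_toReal hMtop
  have hterm : ∀ s ∈ Set.Icc (0:ℝ) t, eLpNorm (h s) 1 volume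
      + ENNReal.ofReal (jt s ^ ((d:ℝ) + a)) * besov a ⊤ (h s) ≤ M := fun s hs =>
    le_of_le_of_eq (le_biSup (f := fun s => eLpNorm (h s) 1 volume
      + ENNReal.ofReal (jt s ^ ((d:ℝ) + a)) * besov a ⊤ (h s)) hs) hMdef.symm
  have hL1 : ∀ s ∈ Set.Icc (0:ℝ) t, (∫ y, |h s y|) ≤ M' := by
    intro s hs
    have h1 : eLpNorm (h s) 1 volume ≤ M := le_trans le_self_add (hterm s hs)
    have h2 : (∫ y, |h s y|) = (eLpNorm (h s) 1 volume).toReal := by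
      rw [eLpNorm_one_eq_lintegral_enorm]
      simp_rw [← Real.norm_eq_abs]
      exact integral_norm_eq_lintegral_enorm (hh s hs).1.1
    rw [h2]
    exact ENNReal.toReal_mono hMtop h1
  have hBes : ∀ s ∈ Set.Icc (0:ℝ) t,
      (besov a ⊤ (h s)).toReal ≤ M' * (jt s) ^ (-((d:ℝ)+a)) := by
    intro s hs
    have h1 : ENNReal.ofReal (jt s ^ ((d:ℝ) + a)) * besov a ⊤ (h s) ≤ M :=
      le_trans le_add_self (hterm s hs)
    have h2 := ENNReal.toReal_mono hMtop h1
    rw [ENNReal.toReal_mul, ENNReal.toReal_ofReal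
      (Real.rpow_nonneg (jt_pos s).le _)] at h2
    have hp : (0:ℝ) < jt s ^ ((d:ℝ)+a) := Real.rpow_pos_of_pos (jt_pos s) _
    rw [Real.rpow_neg (jt_pos s).le, ← div_eq_mul_inv]
    rw [le_div_iff₀ hp]
    linarith [h2]
  -- basic positivity
  have hth : (0:ℝ) < t := lt_of_lt_of_le one_pos ht
  have hth2 : (0:ℝ) < t/2 := by linarith
  have hjt : (0:ℝ) < jt t := jt_pos t
  set c1 : ℝ := C₀ * (t/2) ^ (-((d:ℝ)-1)) * (1+t/2) ^ (-2:ℝ) * M' with hc1def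
  set T1 : ℝ := c1 * (t/2) with hT1def
  set c2 : ℝ := 3 * C₀ * (M' * jt (t/2) ^ (-((d:ℝ)+a))) with hc2def
  set T2 : ℝ := c2 * (2 * t ^ a / a) with hT2def
  have hc1nn : 0 ≤ c1 := by
    rw [hc1def]
    exact mul_nonneg (mul_nonneg (mul_nonneg hC₀.le (Real.rpow_nonneg hth2.le _))
      (Real.rpow_nonneg (by linarith) _)) hM'0
  have hc2nn : 0 ≤ c2 := by
    rw [hc2def]
    exact mul_nonneg (by positivity) (mul_nonneg hM'0 (Real.rpow_nonneg (jt_pos _).le _))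
  have hT1nn : 0 ≤ T1 := mul_nonneg hc1nn hth2.le
  have hT2nn : 0 ≤ T2 := mul_nonneg hc2nn (by positivity)
  -- the pointwise bound
  have key : ∀ x : Ed d, |stConv d G h t x| ≤ T1 + T2 := by
    intro x
    show |∫ s in (0:ℝ)..t, ∫ y : Ed d, G (t - s) (x - y) * h s y| ≤ T1 + T2
    by_cases hKint : IntervalIntegrable
        (fun s => ∫ y : Ed d, G (t - s) (x - y) * h s y) volume 0 t
    case neg =>
      rw [intervalIntegral.integral_undef hKint, abs_zero]
      linarith
    case pos =>
      have hsub1 : Set.uIcc (0:ℝ) (t/2) ⊆ Set.uIcc (0:ℝ) t := by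
        rw [Set.uIcc_of_le hth2.le, Set.uIcc_of_le hth.le]
        exact Set.Icc_subset_Icc le_rfl (by linarith)
      have hsub2 : Set.uIcc (t/2) t ⊆ Set.uIcc (0:ℝ) t := by
        rw [Set.uIcc_of_le (by linarith : t/2 ≤ t), Set.uIcc_of_le hth.le]
        exact Set.Icc_subset_Icc hth2.le le_rfl
      have hI1 := hKint.mono_set hsub1
      have hI2 := hKint.mono_set hsub2
      rw [← intervalIntegral.integral_add_adjacent_intervals hI1 hI2]
      refine le_trans (abs_add_le _ _) (add_le_add ?_ ?_)
      · -- piece 1: [0, t/2]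
        have hb : ∀ s ∈ Set.uIoc (0:ℝ) (t/2),
            ‖∫ y : Ed d, G (t - s) (x - y) * h s y‖ ≤ c1 := by
          intro s hs
          rw [Set.uIoc_of_le hth2.le] at hs
          have hτ : 0 < t - s := by
            have := hs.2; linarith
          obtain ⟨hGint, hGmean, hGsup, hGmom⟩ := hG (t-s) hτ
          have hsIcc : s ∈ Set.Icc (0:ℝ) t := ⟨hs.1.le, by linarith [hs.2]⟩
          have hcs : (0:ℝ) ≤ C₀ * (t-s) ^ (-((d:ℝ)-1)) * (1+(t-s)) ^ (-2:ℝ) := by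
            have := Real.rpow_nonneg hτ.le (-((d:ℝ)-1))
            have := Real.rpow_nonneg (by linarith : (0:ℝ) ≤ 1+(t-s)) (-2:ℝ)
            positivity
          have hcb := conv_sup_bound (hh s hsIcc).1 hcs hGsup x
          rw [Real.norm_eq_abs]
          refine le_trans hcb ?_
          rw [hc1def]
          have e1 : (t-s) ^ (-((d:ℝ)-1)) ≤ (t/2) ^ (-((d:ℝ)-1)) :=
            Real.rpow_le_rpow_of_nonpos hth2 (by linarith [hs.2]) (by linarith)
          have e2 : (1+(t-s)) ^ (-2:ℝ) ≤ (1+t/2) ^ (-2:ℝ) :=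
            Real.rpow_le_rpow_of_nonpos (by linarith) (by linarith [hs.2]) (by norm_num)
          have e3 : (∫ y, |h s y|) ≤ M' := hL1 s hsIcc
          have e4 : (0:ℝ) ≤ ∫ y, |h s y| := integral_nonneg fun y => abs_nonneg _
          gcongr <;> first
            | exact hC₀.le
            | exact Real.rpow_nonneg hth2.le _
            | exact Real.rpow_nonneg hτ.le _
            | positivity
        calc ‖∫ s in (0:ℝ)..(t/2), ∫ y : Ed d, G (t - s) (x - y) * h s y‖
            ≤ c1 * |t/2 - 0| := intervalIntegral.norm_integral_le_of_norm_le_const hb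
          _ = T1 := by rw [hT1def]; rw [sub_zero, abs_of_pos hth2]
      · -- piece 2: [t/2, t]
        set ψ : ℝ → ℝ := fun s => c2 * (1+(t-s)) ^ (a-1) with hψdef
        have hψcont : ContinuousOn ψ (Set.uIcc (t/2) t) := by
          apply ContinuousOn.mul continuousOn_const
          apply ContinuousOn.rpow_const
          · fun_prop
          · intro s hs
            rw [Set.uIcc_of_le (by linarith : t/2 ≤ t)] at hs
            left
            have := hs.2
            nlinarith [hs.2]
        have hψint : IntervalIntegrable ψ volume (t/2) t := hψcont.intervalIntegrable
        have hb : ∀ᵐ s ∂volume.restrict (Set.uIoc (t/2) t),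
            ‖∫ y : Ed d, G (t - s) (x - y) * h s y‖ ≤ ψ s := by
          rw [Set.uIoc_of_le (by linarith : t/2 ≤ t), ae_restrict_iff' measurableSet_Ioc]
          have hnt : ∀ᵐ s : ℝ, s ≠ t := by
            rw [ae_iff]
            simpa using Real.volume_singleton (a := t)
          filter_upwards [hnt] with s hst hs
          have hτ : 0 < t - s := by
            rcases lt_of_le_of_ne hs.2 hst with h'
            linarith
          obtain ⟨hGint, hGmean, hGsup, hGmom⟩ := hG (t-s) hτ
          have hsIcc : s ∈ Set.Icc (0:ℝ) t := ⟨by linarith [hs.1], hs.2⟩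
          -- moment integrability and bound
          have hmom_meas : AEStronglyMeasurable (fun z : Ed d => ‖z‖ ^ a * |G (t-s) z|)
              volume := by
            have hm : Measurable (fun z : Ed d => ‖z‖ ^ a) := by fun_prop
            exact hm.aestronglyMeasurable.mul hGint.1.norm
          have hmom_int : Integrable (fun z : Ed d => ‖z‖ ^ a * |G (t-s) z|) := by
            refine ⟨hmom_meas, ?_⟩
            rw [hasFiniteIntegral_iff_ofReal (ae_of_all _ fun z => by positivity)]
            exact lt_of_le_of_lt hGmom ENNReal.ofReal_lt_top
          have hmom_bd : (∫ z, ‖z‖ ^ a * |G (t-s) z|) ≤ C₀ * (1+(t-s)) ^ (a-1) := by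
            have hnn : (0:ℝ) ≤ C₀ * (1+(t-s)) ^ (a-1) := by
              have := Real.rpow_nonneg (by linarith : (0:ℝ) ≤ 1+(t-s)) (a-1)
              positivity
            rw [integral_eq_lintegral_of_nonneg_ae (ae_of_all _ fun z => by positivity)
              hmom_meas]
            calc (∫⁻ z, ENNReal.ofReal (‖z‖ ^ a * |G (t-s) z|)).toReal
                ≤ (ENNReal.ofReal (C₀ * (1+(t-s)) ^ (a-1))).toReal :=
                  ENNReal.toReal_mono ENNReal.ofReal_ne_top hGmom
              _ = C₀ * (1+(t-s)) ^ (a-1) := ENNReal.toReal_ofReal hnn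
          have hcb := conv_besov_bound hd0 ha0 ha1 hGint hGmean hmom_int
            (hh s hsIcc).1 (hh s hsIcc).2 x
          rw [Real.norm_eq_abs]
          refine le_trans hcb ?_
          have e1 : (besov a ⊤ (h s)).toReal ≤ M' * jt (t/2) ^ (-((d:ℝ)+a)) := by
            refine le_trans (hBes s hsIcc) ?_
            have ej : jt (t/2) ≤ jt s := jt_mono hth2.le hs.1.le
            have := Real.rpow_le_rpow_of_nonpos (jt_pos (t/2)) ej (by linarith : -((d:ℝ)+a) ≤ 0)
            exact mul_le_mul_of_nonneg_left this hM'0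
          have e2 := hmom_bd
          have e3 : (0:ℝ) ≤ ∫ z, ‖z‖ ^ a * |G (t-s) z| :=
            integral_nonneg fun z => by positivity
          rw [hψdef, hc2def]
          calc 3 * (besov a ⊤ (h s)).toReal * ∫ z, ‖z‖ ^ a * |G (t-s) z|
              ≤ 3 * (M' * jt (t/2) ^ (-((d:ℝ)+a))) * (C₀ * (1+(t-s)) ^ (a-1)) := by
                gcongr <;> first
                  | exact ENNReal.toReal_nonneg
                  | exact mul_nonneg hM'0 (Real.rpow_nonneg (jt_pos _).le _)
                  | exact mul_nonneg (by norm_num)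
                      (mul_nonneg hM'0 (Real.rpow_nonneg (jt_pos _).le _))
                  | positivity
            _ = 3 * C₀ * (M' * jt (t/2) ^ (-((d:ℝ)+a))) * (1+(t-s)) ^ (a-1) := by ring
        have hval : (∫ s in (t/2)..t, (1+(t-s)) ^ (a-1)) = ((1+t/2) ^ a - 1)/a := by
          have e1 := intervalIntegral.integral_comp_sub_left (a := t/2) (b := t)
            (fun u : ℝ => (1+u) ^ (a-1)) t
          rw [show t - t = (0:ℝ) by ring, show t - t/2 = t/2 by ring] at e1
          have e2 := intervalIntegral.integral_comp_add_left (a := (0:ℝ)) (b := t/2)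
            (fun v : ℝ => v ^ (a-1)) 1
          rw [show (1:ℝ) + 0 = 1 by ring] at e2
          have e3 := integral_rpow (a := (1:ℝ)) (b := 1 + t/2) (r := a-1)
            (Or.inl (by linarith))
          calc (∫ s in (t/2)..t, (1+(t-s)) ^ (a-1))
              = ∫ u in (0:ℝ)..(t/2), (1+u) ^ (a-1) := e1
            _ = ∫ v in (1:ℝ)..(1+t/2), v ^ (a-1) := e2
            _ = ((1+t/2) ^ (a-1+1) - 1 ^ (a-1+1))/(a-1+1) := e3
            _ = ((1+t/2) ^ a - 1)/a := by
                rw [show a-1+1 = a by ring, Real.one_rpow]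
        have hvnn : (0:ℝ) ≤ ((1+t/2) ^ a - 1)/a := by
          have h2 : (1:ℝ) ^ a ≤ (1+t/2) ^ a :=
            Real.rpow_le_rpow (by norm_num) (by linarith) ha0.le
          rw [Real.one_rpow] at h2
          apply div_nonneg _ ha0.le
          linarith
        have hvle : ((1+t/2) ^ a - 1)/a ≤ 2 * t ^ a / a := by
          have ha2 : (2:ℝ) ^ a ≤ 2 := by
            have h := Real.rpow_le_rpow_of_exponent_le one_le_two ha1.le
            rwa [Real.rpow_one] at h
          have hta : (0:ℝ) ≤ t ^ a := Real.rpow_nonneg hth.le a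
          have h1 : (1+t/2) ^ a ≤ (2*t) ^ a :=
            Real.rpow_le_rpow (by linarith) (by linarith) ha0.le
          have h2 : ((2:ℝ)*t) ^ a = 2 ^ a * t ^ a := Real.mul_rpow (by norm_num) hth.le
          have hnum : (1+t/2) ^ a - 1 ≤ 2 * t ^ a := by nlinarith
          gcongr
        have hψval : (∫ s in (t/2)..t, ψ s) = c2 * (((1+t/2) ^ a - 1)/a) := by
          rw [hψdef]
          rw [intervalIntegral.integral_const_mul, hval]
        calc ‖∫ s in (t/2)..t, ∫ y : Ed d, G (t - s) (x - y) * h s y‖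
            ≤ |∫ s in (t/2)..t, ψ s| := intervalIntegral.norm_integral_le_abs_of_norm_le hb hψint
          _ = c2 * (((1+t/2) ^ a - 1)/a) := by
              rw [hψval, abs_of_nonneg (mul_nonneg hc2nn hvnn)]
          _ ≤ c2 * (2 * t ^ a / a) := mul_le_mul_of_nonneg_left hvle hc2nn
          _ = T2 := hT2def.symm
  -- arithmetic assembly
  have hjtd : (0:ℝ) < jt t ^ (-(d:ℝ)) := Real.rpow_pos_of_pos hjt _
  have hdnn : (0:ℝ) ≤ (d:ℝ) := by positivity
  have hA : T1 ≤ C₀ * (4:ℝ) ^ (d:ℝ) * M' * jt t ^ (-(d:ℝ)) := by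
    have e1 : (1+t/2) ^ (-2:ℝ) ≤ (t/2) ^ (-2:ℝ) :=
      Real.rpow_le_rpow_of_nonpos hth2 (by linarith) (by norm_num)
    have step1 : T1 ≤ C₀ * M' * ((t/2) ^ (-((d:ℝ)-1)) * (t/2) ^ (-2:ℝ) * (t/2)) := by
      rw [hT1def, hc1def]
      calc C₀ * (t/2) ^ (-((d:ℝ)-1)) * (1+t/2) ^ (-2:ℝ) * M' * (t/2)
          ≤ C₀ * (t/2) ^ (-((d:ℝ)-1)) * (t/2) ^ (-2:ℝ) * M' * (t/2) := by
            gcongr <;> first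
              | exact hM'0
              | exact Real.rpow_nonneg hth2.le _
              | positivity
        _ = C₀ * M' * ((t/2) ^ (-((d:ℝ)-1)) * (t/2) ^ (-2:ℝ) * (t/2)) := by ring
    have hpow : (t/2) ^ (-((d:ℝ)-1)) * (t/2) ^ (-2:ℝ) * (t/2) = (t/2) ^ (-(d:ℝ)) := by
      calc (t/2) ^ (-((d:ℝ)-1)) * (t/2) ^ (-2:ℝ) * (t/2)
          = (t/2) ^ (-((d:ℝ)-1)) * (t/2) ^ (-2:ℝ) * (t/2) ^ (1:ℝ) := by
            rw [Real.rpow_one]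
        _ = (t/2) ^ (-((d:ℝ)-1) + (-2:ℝ) + 1) := by
            rw [← Real.rpow_add hth2, ← Real.rpow_add hth2]
        _ = (t/2) ^ (-(d:ℝ)) := by
            congr 1
            ring
    have hfin : (t/2) ^ (-(d:ℝ)) ≤ (4:ℝ) ^ (d:ℝ) * jt t ^ (-(d:ℝ)) := by
      have h1 : jt t / 4 ≤ t/2 := by
        have := jt_le_two_mul ht
        linarith
      have h14 : (0:ℝ) < jt t / 4 := by positivity
      have h2 : (t/2) ^ (-(d:ℝ)) ≤ (jt t/4) ^ (-(d:ℝ)) :=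
        Real.rpow_le_rpow_of_nonpos h14 h1 (by linarith)
      have h3 : (jt t/4) ^ (-(d:ℝ)) = jt t ^ (-(d:ℝ)) / (4:ℝ) ^ (-(d:ℝ)) :=
        Real.div_rpow hjt.le (by norm_num) _
      have h4 : ((4:ℝ)) ^ (-(d:ℝ)) = ((4:ℝ) ^ (d:ℝ))⁻¹ := Real.rpow_neg (by norm_num) _
      have h4' : jt t ^ (-(d:ℝ)) / ((4:ℝ) ^ (d:ℝ))⁻¹ = jt t ^ (-(d:ℝ)) * (4:ℝ) ^ (d:ℝ) := by
        rw [div_eq_mul_inv, inv_inv]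
      rw [h3, h4, h4'] at h2
      calc (t/2) ^ (-(d:ℝ)) ≤ jt t ^ (-(d:ℝ)) * (4:ℝ) ^ (d:ℝ) := h2
        _ = (4:ℝ) ^ (d:ℝ) * jt t ^ (-(d:ℝ)) := mul_comm _ _
    calc T1 ≤ C₀ * M' * ((t/2) ^ (-(d:ℝ))) := by rw [← hpow]; exact step1
      _ ≤ C₀ * M' * ((4:ℝ) ^ (d:ℝ) * jt t ^ (-(d:ℝ))) := by
          apply mul_le_mul_of_nonneg_left hfin (by positivity)
      _ = C₀ * (4:ℝ) ^ (d:ℝ) * M' * jt t ^ (-(d:ℝ)) := by ring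
  have hB : T2 ≤ C₀ * (3 * (2:ℝ) ^ ((d:ℝ)+2) / a) * M' * jt t ^ (-(d:ℝ)) := by
    have h1 : jt t / 2 ≤ jt (t/2) := by
      have := jt_le_two_jt_half t
      linarith
    have h12 : (0:ℝ) < jt t / 2 := by positivity
    have h2 : jt (t/2) ^ (-((d:ℝ)+a)) ≤ (jt t/2) ^ (-((d:ℝ)+a)) :=
      Real.rpow_le_rpow_of_nonpos h12 h1 (by linarith)
    have h3 : (jt t/2) ^ (-((d:ℝ)+a)) = jt t ^ (-((d:ℝ)+a)) * (2:ℝ) ^ ((d:ℝ)+a) := by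
      have e0 : jt t ^ (-((d:ℝ)+a)) / ((2:ℝ) ^ ((d:ℝ)+a))⁻¹
          = jt t ^ (-((d:ℝ)+a)) * (2:ℝ) ^ ((d:ℝ)+a) := by
        rw [div_eq_mul_inv, inv_inv]
      rw [Real.div_rpow hjt.le (by norm_num),
        Real.rpow_neg (by norm_num : (0:ℝ) ≤ 2) ((d:ℝ)+a), e0]
    have h4 : t ^ a ≤ jt t ^ a := Real.rpow_le_rpow hth.le (le_jt hth.le) ha0.le
    have h5 : jt t ^ (-((d:ℝ)+a)) * jt t ^ a = jt t ^ (-(d:ℝ)) := by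
      rw [← Real.rpow_add hjt]
      congr 1
      ring
    have h6 : (2:ℝ) ^ ((d:ℝ)+a) * 2 ≤ (2:ℝ) ^ ((d:ℝ)+2) := by
      have e : (2:ℝ) ^ ((d:ℝ)+a+1) = 2 ^ ((d:ℝ)+a) * 2 :=
        Real.rpow_add_one (by norm_num) _
      rw [← e]
      exact Real.rpow_le_rpow_of_exponent_le one_le_two (by linarith)
    have hjta : (0:ℝ) ≤ jt t ^ (-((d:ℝ)+a)) := Real.rpow_nonneg hjt.le _
    have h2a : (0:ℝ) ≤ (2:ℝ) ^ ((d:ℝ)+a) := Real.rpow_nonneg (by norm_num) _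
    have hta : (0:ℝ) ≤ t ^ a := Real.rpow_nonneg hth.le _
    calc T2 = 3 * C₀ * (M' * jt (t/2) ^ (-((d:ℝ)+a))) * (2 * t ^ a / a) := by
          rw [hT2def, hc2def]
      _ ≤ 3 * C₀ * (M' * (jt t ^ (-((d:ℝ)+a)) * (2:ℝ) ^ ((d:ℝ)+a))) * (2 * jt t ^ a / a) := by
          have hjj : jt (t/2) ^ (-((d:ℝ)+a)) ≤ jt t ^ (-((d:ℝ)+a)) * (2:ℝ) ^ ((d:ℝ)+a) := by
            rw [← h3]
            exact h2
          gcongr <;> first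
            | exact hM'0
            | positivity
      _ = C₀ * M' * ((2:ℝ) ^ ((d:ℝ)+a) * 2) * (jt t ^ (-((d:ℝ)+a)) * jt t ^ a) * (3 / a) := by
          ring
      _ ≤ C₀ * M' * ((2:ℝ) ^ ((d:ℝ)+2)) * (jt t ^ (-((d:ℝ)+a)) * jt t ^ a) * (3 / a) := by
          gcongr <;> first
            | exact hM'0
            | positivity
      _ = C₀ * (3 * (2:ℝ) ^ ((d:ℝ)+2) / a) * M' * jt t ^ (-(d:ℝ)) := by
          rw [h5]
          ring
  have hsum : T1 + T2 ≤ C * (M' * jt t ^ (-(d:ℝ))) := by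
    have e : C * (M' * jt t ^ (-(d:ℝ))) = C₀ * (4:ℝ) ^ (d:ℝ) * M' * jt t ^ (-(d:ℝ))
        + C₀ * (3 * (2:ℝ) ^ ((d:ℝ)+2) / a) * M' * jt t ^ (-(d:ℝ)) := by
      rw [hCdef]
      ring
    rw [e]
    exact add_le_add hA hB
  have hsupb : eLpNorm (stConv d G h t) ⊤ volume
      ≤ ENNReal.ofReal (C * (M' * jt t ^ (-(d:ℝ)))) := by
    rw [eLpNorm_exponent_top]
    apply eLpNormEssSup_le_of_ae_bound (C := C * (M' * jt t ^ (-(d:ℝ))))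
    apply ae_of_all
    intro x
    rw [Real.norm_eq_abs]
    exact (key x).trans hsum
  calc ENNReal.ofReal (jt t ^ (d:ℝ)) * eLpNorm (stConv d G h t) ⊤ volume
      ≤ ENNReal.ofReal (jt t ^ (d:ℝ)) * ENNReal.ofReal (C * (M' * jt t ^ (-(d:ℝ)))) :=
        mul_le_mul_right hsupb _
    _ = ENNReal.ofReal (jt t ^ (d:ℝ) * (C * (M' * jt t ^ (-(d:ℝ))))) :=
        (ENNReal.ofReal_mul (Real.rpow_nonneg hjt.le _)).symm
    _ = ENNReal.ofReal (C * M') := by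
        congr 1
        have hone : jt t ^ (d:ℝ) * jt t ^ (-(d:ℝ)) = 1 := by
          rw [← Real.rpow_add hjt]
          simp
        calc jt t ^ (d:ℝ) * (C * (M' * jt t ^ (-(d:ℝ))))
            = (jt t ^ (d:ℝ) * jt t ^ (-(d:ℝ))) * (C * M') := by ring
          _ = C * M' := by rw [hone, one_mul]
    _ = ENNReal.ofReal C * ENNReal.ofReal M' := ENNReal.ofReal_mul hCpos.le
    _ = ENNReal.ofReal C * M := by rw [hofM]


end
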